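/- Let p > 1 and let QL : ℝ^d × M^{m×d} → [0,∞) be Borel measurable, 1-periodic in x, satisfying α|ξ|^p ≤ QL(x,ξ) ≤ β(1+|ξ|^p) and the Lipschitz-type estimate |QL(x,ζ) − QL(x,ζ')| ≤ K|ζ − ζ'|(1 + |ζ|^{p−1} + |ζ'|^{p−1}) for all x, ζ, ζ' and some constants α, β, K > 0. Then the homogenized function ℋ(QL)(ξ) := inf_{k≥1} inf { (1/k^d) ∫_{kY} QL(x, ξ + ∇φ) dx : φ ∈ W^{1,p}_0(kY;ℝ^m) } is lower semicontinuous on M^{m×d}. -/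

import Mathlib

open MeasureTheory ENNReal Filter Pointwise Bornology

noncomputable instance {m d : ℕ} : MeasurableSpace (Matrix (Fin m) (Fin d) ℝ) := borel _
instance {m d : ℕ} : BorelSpace (Matrix (Fin m) (Fin d) ℝ) := ⟨rfl⟩

/-- The open cube `(0,k)^d` in `ℝ^d`. -/
def cube (d : ℕ) (k : ℕ) : Set (EuclideanSpace ℝ (Fin d)) :=
  {x | ∀ i, x i ∈ Set.Ioo (0 : ℝ) (k : ℝ)}

/-- The gradient matrix `∇φ(x)` of a map `φ : ℝ^d → ℝ^m`. -/
noncomputable def gradMat {d m : ℕ} (φ : EuclideanSpace ℝ (Fin d) → EuclideanSpace ℝ (Fin m))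
    (x : EuclideanSpace ℝ (Fin d)) : Matrix (Fin m) (Fin d) ℝ :=
  Matrix.of fun i j => fderiv ℝ φ x (EuclideanSpace.single j 1) i

/-- A model for `W^{1,p}_0(A;ℝ^m)`. -/
def W1p0 {d m : ℕ} (p : ℝ≥0∞) (A : Set (EuclideanSpace ℝ (Fin d))) :
    Set (EuclideanSpace ℝ (Fin d) → EuclideanSpace ℝ (Fin m)) :=
  {φ | ContDiff ℝ 1 φ ∧ tsupport φ ⊆ A ∧ MeasureTheory.MemLp φ p ∧
    MeasureTheory.MemLp (fun x => fderiv ℝ φ x) p}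

/-- The Dirichlet set function `𝒮_ξ(A)`. -/
noncomputable def dirichletSetFn {d m : ℕ} (p : ℝ≥0∞)
    (W : EuclideanSpace ℝ (Fin d) → Matrix (Fin m) (Fin d) ℝ → ℝ≥0∞)
    (ξ : Matrix (Fin m) (Fin d) ℝ) (A : Set (EuclideanSpace ℝ (Fin d))) : ℝ≥0∞ :=
  ⨅ φ ∈ W1p0 (d := d) (m := m) p A, ∫⁻ x in A, W x (ξ + gradMat φ x)

attribute [local instance] Matrix.frobeniusNormedAddCommGroup

/-- The Braides–Müller homogenization formula for a finite-valued integrand. -/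
noncomputable def homogenizedReal {d m : ℕ} (p : ℝ≥0∞)
    (QL : EuclideanSpace ℝ (Fin d) → Matrix (Fin m) (Fin d) ℝ → ℝ) :
    Matrix (Fin m) (Fin d) ℝ → ℝ := fun ξ =>
  ⨅ k : {k : ℕ // 1 ≤ k}, ⨅ φ : (W1p0 (d := d) (m := m) p (cube d k.1)),
    (∫ x in cube d k.1, QL x (ξ + gradMat φ.1 x)) / ((k.1 : ℝ) ^ d)

namespace HomogAux

lemma cube_eq (d k : ℕ) : cube d k =
    (MeasurableEquiv.toLp 2 (Fin d → ℝ)).symm ⁻¹' (Set.univ.pi fun _ => Set.Ioo (0:ℝ) k) := by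
  ext x; simp [cube, Set.mem_pi]

lemma volume_cube (d k : ℕ) : volume (cube d k) = (k : ℝ≥0∞) ^ d := by
  rw [cube_eq, (EuclideanSpace.volume_preserving_symm_measurableEquiv_toLp (Fin d)).measure_preimage
    (MeasurableSet.univ_pi fun _ => measurableSet_Ioo).nullMeasurableSet]
  rw [volume_pi_pi]
  simp [Real.volume_Ioo]

lemma volume_cube_lt_top (d k : ℕ) : volume (cube d k) < ⊤ := by
  rw [volume_cube]
  exact ENNReal.pow_lt_top (ENNReal.natCast_lt_top k)

lemma volume_cube_toReal (d k : ℕ) : (volume (cube d k)).toReal = (k : ℝ) ^ d := by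
  rw [volume_cube]; simp

lemma euclid_coord_le {n : ℕ} (v : EuclideanSpace ℝ (Fin n)) (i : Fin n) : |v i| ≤ ‖v‖ := by
  rw [EuclideanSpace.norm_eq]
  have h1 : |v i| = Real.sqrt (‖v i‖ ^ 2) := by rw [Real.sqrt_sq_eq_abs]; simp
  rw [h1]
  apply Real.sqrt_le_sqrt
  exact Finset.single_le_sum (f := fun j => ‖v j‖ ^ 2) (fun j _ => by positivity)
    (Finset.mem_univ i)

lemma cube_isBounded (d k : ℕ) : IsBounded (cube d k) := by
  rw [isBounded_iff_forall_norm_le]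
  refine ⟨Real.sqrt (d * k ^ 2), fun x hx => ?_⟩
  rw [EuclideanSpace.norm_eq]
  apply Real.sqrt_le_sqrt
  calc ∑ i, ‖x i‖ ^ 2 ≤ ∑ _i : Fin d, (k : ℝ) ^ 2 := by
        apply Finset.sum_le_sum
        intro i _
        have h0 : (0:ℝ) < x i := (hx i).1
        have h1 : x i < k := (hx i).2
        rw [Real.norm_eq_abs, abs_of_pos h0]
        nlinarith
    _ = d * (k:ℝ)^2 := by simp [Finset.sum_const, mul_comm]

lemma gradMat_bound {d m k : ℕ} (φ : EuclideanSpace ℝ (Fin d) → EuclideanSpace ℝ (Fin m))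
    (hφ : ContDiff ℝ 1 φ) (hsupp : tsupport φ ⊆ cube d k) :
    ∃ B : ℝ, 0 ≤ B ∧ ∀ x, ‖gradMat φ x‖ ≤ B := by
  have hcomp : IsCompact (tsupport φ) :=
    Metric.isCompact_of_isClosed_isBounded (isClosed_tsupport φ)
      ((cube_isBounded d k).subset hsupp)
  have hcont : Continuous fun x => fderiv ℝ φ x := hφ.continuous_fderiv one_ne_zero
  obtain ⟨C, hC⟩ := hcomp.exists_bound_of_continuousOn hcont.continuousOn
  have hC' : ∀ x, ‖fderiv ℝ φ x‖ ≤ max C 0 := by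
    intro x
    by_cases hx : x ∈ tsupport φ
    · exact (hC x hx).trans (le_max_left _ _)
    · have : fderiv ℝ φ x = 0 := by
        have := support_fderiv_subset (𝕜 := ℝ) (f := φ)
        by_contra h
        exact hx (this (by simpa [Function.mem_support] using h))
      simp [this]
  refine ⟨((m : ℝ) * d * (max C 0) ^ (2:ℝ)) ^ ((1:ℝ)/2),
    Real.rpow_nonneg (by positivity) _, fun x => ?_⟩
  have hentry : ∀ i j, ‖gradMat φ x i j‖ ≤ max C 0 := by
    intro i j
    rw [Real.norm_eq_abs]
    calc |gradMat φ x i j| ≤ ‖fderiv ℝ φ x (EuclideanSpace.single j 1)‖ :=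
          euclid_coord_le _ i
      _ ≤ ‖fderiv ℝ φ x‖ * ‖EuclideanSpace.single j (1:ℝ)‖ :=
          (fderiv ℝ φ x).le_opNorm _
      _ ≤ max C 0 := by
          rw [EuclideanSpace.norm_single]
          simpa using hC' x
  rw [Matrix.frobenius_norm_def]
  apply Real.rpow_le_rpow (by positivity) ?_ (by norm_num)
  calc ∑ i, ∑ j, ‖gradMat φ x i j‖ ^ (2:ℝ)
      ≤ ∑ _i : Fin m, ∑ _j : Fin d, (max C 0) ^ (2:ℝ) := by
        refine Finset.sum_le_sum fun i _ => Finset.sum_le_sum fun j _ => ?_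
        exact Real.rpow_le_rpow (norm_nonneg _) (hentry i j) (by norm_num)
    _ = (m : ℝ) * d * (max C 0) ^ (2:ℝ) := by
        simp [Finset.sum_const, mul_assoc]

lemma continuous_of_entries {d m : ℕ} {X : Type*} [TopologicalSpace X]
    (f : X → Matrix (Fin m) (Fin d) ℝ)
    (hf : ∀ i j, Continuous fun x => f x i j) : Continuous f := by
  exact continuous_pi fun i => continuous_pi fun j => hf i j

lemma gradMat_continuous {d m : ℕ} (φ : EuclideanSpace ℝ (Fin d) → EuclideanSpace ℝ (Fin m))
    (hφ : ContDiff ℝ 1 φ) : Continuous fun x => gradMat φ x := by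
  apply continuous_of_entries
  intro i j
  have h1 : Continuous fun x => fderiv ℝ φ x := hφ.continuous_fderiv one_ne_zero
  have h2 : Continuous fun x => fderiv ℝ φ x (EuclideanSpace.single j 1) :=
    h1.clm_apply continuous_const
  exact (EuclideanSpace.proj i).continuous.comp h2

lemma gradMat_zero {d m : ℕ} (x : EuclideanSpace ℝ (Fin d)) :
    gradMat (m := m) 0 x = 0 := by
  ext i j
  simp only [gradMat, Matrix.of_apply]
  have : fderiv ℝ (0 : EuclideanSpace ℝ (Fin d) → EuclideanSpace ℝ (Fin m)) x = 0 := by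
    have : (0 : EuclideanSpace ℝ (Fin d) → EuclideanSpace ℝ (Fin m))
        = fun _ => 0 := rfl
    rw [this, fderiv_fun_const]
    rfl
  rw [this]
  rfl

lemma zero_mem_W1p0 {d m : ℕ} (p : ℝ≥0∞) (A : Set (EuclideanSpace ℝ (Fin d))) :
    (0 : EuclideanSpace ℝ (Fin d) → EuclideanSpace ℝ (Fin m)) ∈ W1p0 p A := by
  refine ⟨contDiff_const, ?_, ?_, ?_⟩
  · have : tsupport (0 : EuclideanSpace ℝ (Fin d) → EuclideanSpace ℝ (Fin m)) = ∅ := by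
      simp [tsupport, Function.support_zero]
    rw [this]; exact Set.empty_subset _
  · exact MeasureTheory.MemLp.zero
  · have : (fun x => fderiv ℝ (0 : EuclideanSpace ℝ (Fin d) → EuclideanSpace ℝ (Fin m)) x)
        = fun _ => 0 := by
      funext x
      have h0 : (0 : EuclideanSpace ℝ (Fin d) → EuclideanSpace ℝ (Fin m))
          = fun _ => 0 := rfl
      rw [h0, fderiv_fun_const]; rfl
    rw [this]
    exact MeasureTheory.MemLp.zero' (ε := EuclideanSpace ℝ (Fin d) →L[ℝ] EuclideanSpace ℝ (Fin m))

end HomogAux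

namespace HomogAux

lemma rpow_sub_one_le {a : ℝ} (ha : 0 ≤ a) {p : ℝ} (hp : 1 ≤ p) :
    a ^ (p - 1) ≤ 1 + a ^ p := by
  rcases le_total a 1 with h | h
  · have h1 : a ^ (p - 1) ≤ 1 := Real.rpow_le_one ha h (by linarith)
    have h2 : 0 ≤ a ^ p := Real.rpow_nonneg ha p
    linarith
  · have h1 : a ^ (p - 1) ≤ a ^ p :=
      Real.rpow_le_rpow_of_exponent_le h (by linarith)
    linarith

lemma rpow_shift_le {a b s : ℝ} (ha : 0 ≤ a) (hb : 0 ≤ b) (hba : b ≤ a + s) (hs : s ≤ 1)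
    {p : ℝ} (hp : 1 ≤ p) : b ^ p ≤ 2 ^ p * (1 + a ^ p) := by
  have hp0 : 0 ≤ p := by linarith
  have h2p : (0:ℝ) ≤ 2 ^ p := Real.rpow_nonneg (by norm_num) p
  rcases le_total a 1 with h | h
  · have hb2 : b ≤ 2 := by linarith
    have : b ^ p ≤ 2 ^ p := Real.rpow_le_rpow hb hb2 hp0
    have hap : 0 ≤ a ^ p := Real.rpow_nonneg ha p
    nlinarith
  · have hb2 : b ≤ 2 * a := by linarith
    have h1 : b ^ p ≤ (2 * a) ^ p := Real.rpow_le_rpow hb hb2 hp0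
    rw [Real.mul_rpow (by norm_num) ha] at h1
    have hap : 0 ≤ a ^ p := Real.rpow_nonneg ha p
    nlinarith

variable {d m : ℕ}

lemma integrand_measurable (QL : EuclideanSpace ℝ (Fin d) → Matrix (Fin m) (Fin d) ℝ → ℝ)
    (hmeas : Measurable (Function.uncurry QL)) (ξ : Matrix (Fin m) (Fin d) ℝ)
    {φ : EuclideanSpace ℝ (Fin d) → EuclideanSpace ℝ (Fin m)} (hφ : ContDiff ℝ 1 φ) :
    Measurable fun x => QL x (ξ + gradMat φ x) := by
  have h1 : Continuous fun x => ξ + gradMat φ x :=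
    continuous_const.add (gradMat_continuous φ hφ)
  exact hmeas.comp (measurable_id.prodMk h1.measurable)

lemma QL_nonneg {QL : EuclideanSpace ℝ (Fin d) → Matrix (Fin m) (Fin d) ℝ → ℝ}
    {p α β : ℝ} (hα : 0 < α)
    (hgrowth : ∀ x ξ, α * ‖ξ‖ ^ p ≤ QL x ξ ∧ QL x ξ ≤ β * (1 + ‖ξ‖ ^ p))
    (x : EuclideanSpace ℝ (Fin d)) (ξ : Matrix (Fin m) (Fin d) ℝ) : 0 ≤ QL x ξ := by
  refine le_trans ?_ (hgrowth x ξ).1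
  have := Real.rpow_nonneg (norm_nonneg ξ) p
  positivity

lemma integrand_integrable (QL : EuclideanSpace ℝ (Fin d) → Matrix (Fin m) (Fin d) ℝ → ℝ)
    (hmeas : Measurable (Function.uncurry QL)) {p α β : ℝ} (hp : 0 ≤ p)
    (hα : 0 < α) (hβ : 0 < β)
    (hgrowth : ∀ x ξ, α * ‖ξ‖ ^ p ≤ QL x ξ ∧ QL x ξ ≤ β * (1 + ‖ξ‖ ^ p))
    {k : ℕ} {φ : EuclideanSpace ℝ (Fin d) → EuclideanSpace ℝ (Fin m)}
    (hφ : ContDiff ℝ 1 φ) (hsupp : tsupport φ ⊆ cube d k) (ξ : Matrix (Fin m) (Fin d) ℝ) :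
    IntegrableOn (fun x => QL x (ξ + gradMat φ x)) (cube d k) := by
  obtain ⟨B, hB0, hB⟩ := gradMat_bound φ hφ hsupp
  have hbound : ∀ x, ‖QL x (ξ + gradMat φ x)‖ ≤ β * (1 + (‖ξ‖ + B) ^ p) := by
    intro x
    rw [Real.norm_eq_abs, abs_of_nonneg (QL_nonneg hα hgrowth _ _)]
    refine le_trans (hgrowth x _).2 ?_
    have h1 : ‖ξ + gradMat φ x‖ ≤ ‖ξ‖ + B :=
      (norm_add_le _ _).trans (by linarith [hB x])
    have h2 : ‖ξ + gradMat φ x‖ ^ p ≤ (‖ξ‖ + B) ^ p :=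
      Real.rpow_le_rpow (norm_nonneg _) h1 hp
    nlinarith
  refine Integrable.mono' (g := fun _ => β * (1 + (‖ξ‖ + B) ^ p)) ?_
    (integrand_measurable QL hmeas ξ hφ).aestronglyMeasurable
    (Filter.Eventually.of_forall hbound)
  have : IntegrableOn (fun _ => β * (1 + (‖ξ‖ + B) ^ p)) (cube d k) := by
    exact integrableOn_const (volume_cube_lt_top d k).ne
  exact this

lemma pointwise_est (QL : EuclideanSpace ℝ (Fin d) → Matrix (Fin m) (Fin d) ℝ → ℝ)
    {p α β K : ℝ} (hp : 1 < p) (hα : 0 < α) (hK : 0 < K)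
    (hgrowth : ∀ x ξ, α * ‖ξ‖ ^ p ≤ QL x ξ ∧ QL x ξ ≤ β * (1 + ‖ξ‖ ^ p))
    (hlip : ∀ x ζ ζ', |QL x ζ - QL x ζ'|
      ≤ K * ‖ζ - ζ'‖ * (1 + ‖ζ‖ ^ (p - 1) + ‖ζ'‖ ^ (p - 1)))
    (x : EuclideanSpace ℝ (Fin d)) (ξ ξ₀ G : Matrix (Fin m) (Fin d) ℝ)
    (hs : ‖ξ₀ - ξ‖ ≤ 1) :
    QL x (ξ₀ + G) ≤ QL x (ξ + G)
      + K * ‖ξ₀ - ξ‖ * ((3 + 2 ^ p) + (1 + 2 ^ p) / α * QL x (ξ + G)) := by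
  set ζ := ξ + G with hζ
  set ζ₀ := ξ₀ + G with hζ₀
  have hdiff : ζ₀ - ζ = ξ₀ - ξ := by rw [hζ, hζ₀]; abel
  have h1 : QL x ζ₀ - QL x ζ
      ≤ K * ‖ξ₀ - ξ‖ * (1 + ‖ζ₀‖ ^ (p - 1) + ‖ζ‖ ^ (p - 1)) := by
    have := hlip x ζ₀ ζ
    rw [hdiff] at this
    exact (le_abs_self _).trans this
  have ha : (0:ℝ) ≤ ‖ζ‖ := norm_nonneg _
  have hb0 : (0:ℝ) ≤ ‖ζ₀‖ := norm_nonneg _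
  have hb : ‖ζ₀‖ ≤ ‖ζ‖ + ‖ξ₀ - ξ‖ := by
    have : ζ₀ = ζ + (ξ₀ - ξ) := by rw [hζ, hζ₀]; abel
    rw [this]; exact norm_add_le _ _
  have hp1 : (1:ℝ) ≤ p := hp.le
  have e1 : ‖ζ‖ ^ (p - 1) ≤ 1 + ‖ζ‖ ^ p := rpow_sub_one_le ha hp1
  have e2 : ‖ζ₀‖ ^ (p - 1) ≤ 1 + 2 ^ p * (1 + ‖ζ‖ ^ p) := by
    refine (rpow_sub_one_le hb0 hp1).trans ?_
    have := rpow_shift_le ha hb0 hb hs hp1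
    linarith
  have e3 : ‖ζ‖ ^ p ≤ QL x ζ / α := by
    rw [le_div_iff₀ hα, mul_comm]
    exact (hgrowth x ζ).1
  have h2p : (0:ℝ) ≤ 2 ^ p := Real.rpow_nonneg (by norm_num) p
  have hap : (0:ℝ) ≤ ‖ζ‖ ^ p := Real.rpow_nonneg ha p
  have hQ : (0:ℝ) ≤ QL x ζ := QL_nonneg hα hgrowth _ _
  have key : 1 + ‖ζ₀‖ ^ (p - 1) + ‖ζ‖ ^ (p - 1)
      ≤ (3 + 2 ^ p) + (1 + 2 ^ p) / α * QL x ζ := by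
    have e4 : ‖ζ‖ ^ p ≤ QL x ζ / α := e3
    have e5 : (1 + 2 ^ p) * ‖ζ‖ ^ p ≤ (1 + 2 ^ p) * (QL x ζ / α) :=
      mul_le_mul_of_nonneg_left e4 (by linarith)
    have : (1 + 2 ^ p) / α * QL x ζ = (1 + 2 ^ p) * (QL x ζ / α) := by ring
    rw [this]
    nlinarith
  have hKs : (0:ℝ) ≤ K * ‖ξ₀ - ξ‖ := by positivity
  have := mul_le_mul_of_nonneg_left key hKs
  linarith

end HomogAux

namespace HomogAux

variable {d m : ℕ}

lemma integral_est (QL : EuclideanSpace ℝ (Fin d) → Matrix (Fin m) (Fin d) ℝ → ℝ)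
    (hmeas : Measurable (Function.uncurry QL)) {p α β K : ℝ} (hp : 1 < p)
    (hα : 0 < α) (hβ : 0 < β) (hK : 0 < K)
    (hgrowth : ∀ x ξ, α * ‖ξ‖ ^ p ≤ QL x ξ ∧ QL x ξ ≤ β * (1 + ‖ξ‖ ^ p))
    (hlip : ∀ x ζ ζ', |QL x ζ - QL x ζ'|
      ≤ K * ‖ζ - ζ'‖ * (1 + ‖ζ‖ ^ (p - 1) + ‖ζ'‖ ^ (p - 1)))
    {k : ℕ} {φ : EuclideanSpace ℝ (Fin d) → EuclideanSpace ℝ (Fin m)}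
    (hφ : ContDiff ℝ 1 φ) (hsupp : tsupport φ ⊆ cube d k)
    (ξ ξ₀ : Matrix (Fin m) (Fin d) ℝ) (hs : ‖ξ₀ - ξ‖ ≤ 1) :
    (∫ x in cube d k, QL x (ξ₀ + gradMat φ x))
      ≤ (∫ x in cube d k, QL x (ξ + gradMat φ x))
        + K * ‖ξ₀ - ξ‖ * ((3 + 2 ^ p) * (k:ℝ)^d
          + (1 + 2 ^ p) / α * ∫ x in cube d k, QL x (ξ + gradMat φ x)) := by
  have hp0 : (0:ℝ) ≤ p := by linarith
  have hint : IntegrableOn (fun x => QL x (ξ + gradMat φ x)) (cube d k) :=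
    integrand_integrable QL hmeas hp0 hα hβ hgrowth hφ hsupp ξ
  have hint₀ : IntegrableOn (fun x => QL x (ξ₀ + gradMat φ x)) (cube d k) :=
    integrand_integrable QL hmeas hp0 hα hβ hgrowth hφ hsupp ξ₀
  have hconst : IntegrableOn (fun _ => (3 + 2 ^ p : ℝ)) (cube d k) := by
    exact integrableOn_const (volume_cube_lt_top d k).ne
  have hin : IntegrableOn (fun x => (3 + 2 ^ p : ℝ)
      + (1 + 2 ^ p) / α * QL x (ξ + gradMat φ x)) (cube d k) :=
    hconst.add (hint.const_mul _)
  have hRHS : IntegrableOn (fun x => QL x (ξ + gradMat φ x)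
      + K * ‖ξ₀ - ξ‖ * ((3 + 2 ^ p)
        + (1 + 2 ^ p) / α * QL x (ξ + gradMat φ x))) (cube d k) :=
    hint.add (hin.const_mul _)
  have hmono := integral_mono hint₀ hRHS
    (fun x => pointwise_est QL hp hα hK hgrowth hlip x ξ ξ₀ (gradMat φ x) hs)
  refine hmono.trans (le_of_eq ?_)
  rw [integral_add hint (hin.const_mul _), integral_const_mul, integral_add hconst
    (hint.const_mul _), integral_const_mul, setIntegral_const, measureReal_def, volume_cube_toReal,
    smul_eq_mul]
  ring

lemma term_nonneg (QL : EuclideanSpace ℝ (Fin d) → Matrix (Fin m) (Fin d) ℝ → ℝ)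
    {p α β : ℝ} (hα : 0 < α)
    (hgrowth : ∀ x ξ, α * ‖ξ‖ ^ p ≤ QL x ξ ∧ QL x ξ ≤ β * (1 + ‖ξ‖ ^ p))
    (ξ : Matrix (Fin m) (Fin d) ℝ) (k : ℕ)
    (φ : EuclideanSpace ℝ (Fin d) → EuclideanSpace ℝ (Fin m)) :
    0 ≤ (∫ x in cube d k, QL x (ξ + gradMat φ x)) / ((k : ℝ) ^ d) := by
  apply div_nonneg _ (by positivity)
  exact integral_nonneg fun x => QL_nonneg hα hgrowth _ _

lemma homog_le_term (P : ℝ≥0∞) (QL : EuclideanSpace ℝ (Fin d) → Matrix (Fin m) (Fin d) ℝ → ℝ)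
    {p α β : ℝ} (hα : 0 < α)
    (hgrowth : ∀ x ξ, α * ‖ξ‖ ^ p ≤ QL x ξ ∧ QL x ξ ≤ β * (1 + ‖ξ‖ ^ p))
    (ξ : Matrix (Fin m) (Fin d) ℝ) (k : {k : ℕ // 1 ≤ k})
    (φ : (W1p0 (d := d) (m := m) P (cube d k.1))) :
    homogenizedReal P QL ξ
      ≤ (∫ x in cube d k.1, QL x (ξ + gradMat φ.1 x)) / ((k.1 : ℝ) ^ d) := by
  have hbdd : ∀ k' : {k : ℕ // 1 ≤ k},
      BddBelow (Set.range fun φ' : (W1p0 (d := d) (m := m) P (cube d k'.1)) =>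
        (∫ x in cube d k'.1, QL x (ξ + gradMat φ'.1 x)) / ((k'.1 : ℝ) ^ d)) := by
    intro k'
    refine ⟨0, ?_⟩
    rintro _ ⟨φ', rfl⟩
    exact term_nonneg QL hα hgrowth ξ k'.1 φ'.1
  haveI : ∀ k' : {k : ℕ // 1 ≤ k}, Nonempty (W1p0 (d := d) (m := m) P (cube d k'.1)) :=
    fun k' => ⟨⟨0, zero_mem_W1p0 P _⟩⟩
  refine le_trans (ciInf_le ?_ k) (ciInf_le (hbdd k) φ)
  refine ⟨0, ?_⟩
  rintro _ ⟨k', rfl⟩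
  exact le_ciInf fun φ' => term_nonneg QL hα hgrowth ξ k'.1 φ'.1

lemma homog_le_growth (P : ℝ≥0∞) (QL : EuclideanSpace ℝ (Fin d) → Matrix (Fin m) (Fin d) ℝ → ℝ)
    (hmeas : Measurable (Function.uncurry QL)) {p α β : ℝ} (hp : 0 ≤ p)
    (hα : 0 < α) (hβ : 0 < β)
    (hgrowth : ∀ x ξ, α * ‖ξ‖ ^ p ≤ QL x ξ ∧ QL x ξ ≤ β * (1 + ‖ξ‖ ^ p))
    (ξ : Matrix (Fin m) (Fin d) ℝ) :
    homogenizedReal P QL ξ ≤ β * (1 + ‖ξ‖ ^ p) := by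
  have h0 := homog_le_term P QL hα hgrowth ξ ⟨1, le_rfl⟩
    ⟨0, zero_mem_W1p0 P (cube d 1)⟩
  refine h0.trans ?_
  have hzero : ∀ x : EuclideanSpace ℝ (Fin d),
      QL x (ξ + gradMat (0 : EuclideanSpace ℝ (Fin d) → EuclideanSpace ℝ (Fin m)) x)
        = QL x ξ := by
    intro x; rw [gradMat_zero, add_zero]
  have hint : IntegrableOn (fun x => QL x (ξ + gradMat
      (0 : EuclideanSpace ℝ (Fin d) → EuclideanSpace ℝ (Fin m)) x)) (cube d 1) :=
    integrand_integrable QL hmeas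
      (φ := (0 : EuclideanSpace ℝ (Fin d) → EuclideanSpace ℝ (Fin m)))
      hp hα hβ hgrowth contDiff_const (by
      have h : tsupport (0 : EuclideanSpace ℝ (Fin d) → EuclideanSpace ℝ (Fin m)) = ∅ := by
        simp [tsupport, Function.support_zero]
      rw [h]; exact Set.empty_subset _) ξ
  have hconst : IntegrableOn (fun _ => β * (1 + ‖ξ‖ ^ p)) (cube d 1) := by
    exact integrableOn_const (volume_cube_lt_top d 1).ne
  have hmono := integral_mono hint hconst (fun x => by
    rw [hzero x]; exact (hgrowth x ξ).2)
  rw [setIntegral_const, measureReal_def, volume_cube_toReal] at hmono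
  simp only [Nat.cast_one, one_pow, smul_eq_mul, one_mul] at hmono ⊢
  rw [div_one]
  exact hmono

end HomogAux

open HomogAux

/-- for a periodic integrand `QL` with `p`-growth (`p > 1`) and the
Lipschitz-type estimate, the homogenized function `ℋ(QL)` is lower semicontinuous. -/
theorem homogenizedReal_lowerSemicontinuous {d m : ℕ} (p : ℝ) (hp : 1 < p)
    (QL : EuclideanSpace ℝ (Fin d) → Matrix (Fin m) (Fin d) ℝ → ℝ)
    (hmeas : Measurable (Function.uncurry QL))
    (hper : ∀ (x : EuclideanSpace ℝ (Fin d)) (z : Fin d → ℤ) (ξ : Matrix (Fin m) (Fin d) ℝ),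
      QL (x + (WithLp.equiv 2 (Fin d → ℝ)).symm fun i => (z i : ℝ)) ξ = QL x ξ)
    (α β K : ℝ) (hα : 0 < α) (hβ : 0 < β) (hK : 0 < K)
    (hgrowth : ∀ x ξ, α * ‖ξ‖ ^ p ≤ QL x ξ ∧ QL x ξ ≤ β * (1 + ‖ξ‖ ^ p))
    (hlip : ∀ x ζ ζ', |QL x ζ - QL x ζ'|
      ≤ K * ‖ζ - ζ'‖ * (1 + ‖ζ‖ ^ (p - 1) + ‖ζ'‖ ^ (p - 1))) :
    LowerSemicontinuous (homogenizedReal (ENNReal.ofReal p) QL) := by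
  intro ξ₀ y hy
  set P := ENNReal.ofReal p with hP
  have hp1 : (1:ℝ) ≤ p := hp.le
  have hp0 : (0:ℝ) ≤ p := by linarith
  have h2p : (0:ℝ) ≤ 2 ^ p := Real.rpow_nonneg (by norm_num) p
  set R : ℝ := ‖ξ₀‖ + 1 with hR
  have hR0 : (0:ℝ) ≤ R := by positivity
  have hRp0 : (0:ℝ) ≤ R ^ p := Real.rpow_nonneg hR0 p
  set M : ℝ := β * (1 + R ^ p) + 1 with hM
  have hM0 : (0:ℝ) ≤ M := by nlinarith
  set c : ℝ := K * ((3 + 2 ^ p) + (1 + 2 ^ p) * M / α) with hc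
  have hc0 : (0:ℝ) ≤ c := by
    apply mul_nonneg hK.le
    have : (0:ℝ) ≤ (1 + 2 ^ p) * M / α := div_nonneg (mul_nonneg (by linarith) hM0) hα.le
    linarith
  haveI hne : ∀ k' : {k : ℕ // 1 ≤ k},
      Nonempty (W1p0 (d := d) (m := m) P (cube d k'.1)) :=
    fun k' => ⟨⟨0, zero_mem_W1p0 P _⟩⟩
  have key : ∀ ξ, ‖ξ₀ - ξ‖ ≤ 1 →
      homogenizedReal P QL ξ₀ ≤ homogenizedReal P QL ξ + c * ‖ξ₀ - ξ‖ := by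
    intro ξ hs1
    refine le_of_forall_pos_le_add fun ε' hε' => ?_
    set δ := min ε' 1 with hδdef
    have hδ0 : 0 < δ := lt_min hε' one_pos
    have hδ1 : δ ≤ 1 := min_le_right _ _
    have hδε : δ ≤ ε' := min_le_left _ _
    have hlt : (⨅ k : {k : ℕ // 1 ≤ k}, ⨅ φ : (W1p0 (d := d) (m := m) P (cube d k.1)),
        (∫ x in cube d k.1, QL x (ξ + gradMat φ.1 x)) / ((k.1 : ℝ) ^ d))
        < homogenizedReal P QL ξ + δ := lt_add_of_pos_right _ hδ0
    obtain ⟨k, hk⟩ := exists_lt_of_ciInf_lt hlt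
    obtain ⟨φ, hφlt⟩ := exists_lt_of_ciInf_lt hk
    set G := (∫ x in cube d k.1, QL x (ξ + gradMat φ.1 x)) / ((k.1 : ℝ) ^ d) with hGdef
    obtain ⟨hφ1, hφ2, -, -⟩ := φ.2
    have hk1 : (1:ℝ) ≤ (k.1 : ℝ) := by exact_mod_cast k.2
    have hkd : (0:ℝ) < ((k.1:ℝ)) ^ d := by positivity
    have hG0 : 0 ≤ G := term_nonneg QL hα hgrowth ξ k.1 φ.1
    have hξR : ‖ξ‖ ≤ R := by
      have h1 : ‖ξ‖ - ‖ξ₀‖ ≤ ‖ξ - ξ₀‖ := norm_sub_norm_le ξ ξ₀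
      rw [norm_sub_rev] at h1
      rw [hR]; linarith
    have hHβ := homog_le_growth P QL hmeas hp0 hα hβ hgrowth ξ
    have hRp : ‖ξ‖ ^ p ≤ R ^ p := Real.rpow_le_rpow (norm_nonneg _) hξR hp0
    have hGM : G ≤ M := by
      have h2 : β * (1 + ‖ξ‖ ^ p) ≤ β * (1 + R ^ p) :=
        mul_le_mul_of_nonneg_left (by linarith) hβ.le
      rw [hM]; linarith
    have hint := integral_est QL hmeas hp hα hβ hK hgrowth hlip hφ1 hφ2 ξ ξ₀ hs1
    have hterm0 : homogenizedReal P QL ξ₀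
        ≤ (∫ x in cube d k.1, QL x (ξ₀ + gradMat φ.1 x)) / ((k.1:ℝ) ^ d) :=
      homog_le_term P QL hα hgrowth ξ₀ k φ
    have hdiv : (∫ x in cube d k.1, QL x (ξ₀ + gradMat φ.1 x)) / ((k.1:ℝ) ^ d)
        ≤ G + K * ‖ξ₀ - ξ‖ * ((3 + 2 ^ p) + (1 + 2 ^ p) / α * G) := by
      calc (∫ x in cube d k.1, QL x (ξ₀ + gradMat φ.1 x)) / ((k.1:ℝ) ^ d)
          ≤ ((∫ x in cube d k.1, QL x (ξ + gradMat φ.1 x))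
            + K * ‖ξ₀ - ξ‖ * ((3 + 2 ^ p) * ((k.1:ℝ))^d
              + (1 + 2 ^ p) / α * ∫ x in cube d k.1, QL x (ξ + gradMat φ.1 x)))
            / ((k.1:ℝ) ^ d) := by gcongr
        _ = G + K * ‖ξ₀ - ξ‖ * ((3 + 2 ^ p) + (1 + 2 ^ p) / α * G) := by
            rw [hGdef]
            field_simp
    have hKs : (0:ℝ) ≤ K * ‖ξ₀ - ξ‖ := by positivity
    have hb1 : K * ‖ξ₀ - ξ‖ * ((3 + 2 ^ p) + (1 + 2 ^ p) / α * G)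
        ≤ K * ‖ξ₀ - ξ‖ * ((3 + 2 ^ p) + (1 + 2 ^ p) / α * M) := by
      apply mul_le_mul_of_nonneg_left _ hKs
      have h3 : (0:ℝ) ≤ (1 + 2 ^ p) / α := div_nonneg (by linarith) hα.le
      have := mul_le_mul_of_nonneg_left hGM h3
      linarith
    have hcs : K * ‖ξ₀ - ξ‖ * ((3 + 2 ^ p) + (1 + 2 ^ p) / α * M) = c * ‖ξ₀ - ξ‖ := by
      rw [hc]; ring
    linarith
  set ε := homogenizedReal P QL ξ₀ - y with hε
  have hε0 : 0 < ε := sub_pos.2 hy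
  set r := min 1 (ε / (c + 1)) with hr
  have hr0 : 0 < r := lt_min one_pos (div_pos hε0 (by linarith))
  have hev : ∀ᶠ ξ in nhds ξ₀, ‖ξ₀ - ξ‖ < r := by
    have hcont : Continuous fun ξ : Matrix (Fin m) (Fin d) ℝ => ‖ξ₀ - ξ‖ :=
      (continuous_const.sub continuous_id).norm
    have h0 : Filter.Tendsto (fun ξ : Matrix (Fin m) (Fin d) ℝ => ‖ξ₀ - ξ‖)
        (nhds ξ₀) (nhds 0) := by simpa using hcont.tendsto ξ₀
    exact h0.eventually_lt_const hr0
  filter_upwards [hev] with ξ hξ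
  have h1 := key ξ (le_of_lt (hξ.trans_le (min_le_left _ _)))
  have h2 : c * ‖ξ₀ - ξ‖ < ε := by
    have ha : c * ‖ξ₀ - ξ‖ ≤ c * r := mul_le_mul_of_nonneg_left hξ.le hc0
    have hb : c * r < (c + 1) * r := by nlinarith
    have hcr : (c + 1) * r ≤ (c + 1) * (ε / (c + 1)) :=
      mul_le_mul_of_nonneg_left (min_le_right _ _) (by linarith)
    have heq : (c + 1) * (ε / (c + 1)) = ε := by field_simp
    linarith
  linarith
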